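/- The family (1 + 1/(p(p−1)))_{p prime} is multipliable, and the product over all primes satisfies Π_{p prime} (1 + 1/(p(p−1))) = (315/(2π⁴))·ζ(3), where ζ(3) = Σ_{n ≥ 1} 1/n³. (This value is Landau's totient constant, equal to 1.943596… .) -/

import Mathlib

open scoped BigOperators

open Finset Real

/-- The Riemann zeta value `ζ(3) = Σ_{n ≥ 1} 1/n³`. -/
noncomputable def zetaThree : ℝ := ∑' n : ℕ, 1 / ((n : ℝ) + 1) ^ 3

/-- Auxiliary: the completely multiplicative function `n ↦ n⁻¹ ^ (k+2)` on `ℕ`. -/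
noncomputable def zpowAux (k : ℕ) : ℕ →*₀ ℝ where
  toFun n := ((n : ℝ)⁻¹) ^ (k + 2)
  map_zero' := by simp
  map_one' := by simp
  map_mul' m n := by push_cast; rw [mul_inv, mul_pow]

lemma zpowAux_apply (k n : ℕ) : zpowAux k n = ((n : ℝ)⁻¹) ^ (k + 2) := rfl

lemma zpowAux_summable (k : ℕ) : Summable (fun n : ℕ => ‖zpowAux k n‖) := by
  have h : ∀ n : ℕ, ‖zpowAux k n‖ = 1 / (n : ℝ) ^ (k + 2) := fun n => by
    rw [zpowAux_apply, Real.norm_eq_abs, abs_of_nonneg (by positivity), inv_pow, one_div]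
  rw [funext h]
  exact (Real.summable_one_div_nat_pow).mpr (by omega)

lemma zpowAux_euler (k : ℕ) :
    HasProd (fun p : Nat.Primes => (1 - zpowAux k p)⁻¹) (∑' n : ℕ, zpowAux k n) :=
  EulerProduct.eulerProduct_completely_multiplicative_hasProd (zpowAux_summable k)

theorem bernoulli'_five' : bernoulli' 5 = 0 := by
  rw [bernoulli'_def]; norm_num [sum_range_succ, sum_range_zero, Nat.choose]

theorem bernoulli_six' : bernoulli 6 = 1 / 42 := by
  rw [bernoulli_eq_bernoulli'_of_ne_one (by norm_num), bernoulli'_def]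
  norm_num [sum_range_succ, sum_range_zero, Nat.choose, bernoulli'_five']

theorem hasSum_zeta_six' : HasSum (fun n : ℕ => (1 : ℝ) / (n : ℝ) ^ 6) (π ^ 6 / 945) := by
  convert hasSum_zeta_nat (k := 3) (by norm_num) using 1
  rw [bernoulli_six']
  push_cast
  norm_num [Nat.factorial]
  ring

lemma tsum_zpowAux_zero : ∑' n : ℕ, zpowAux 0 n = π ^ 2 / 6 := by
  rw [← hasSum_zeta_two.tsum_eq]
  exact tsum_congr fun n => by rw [zpowAux_apply, inv_pow, one_div]

lemma tsum_zpowAux_four : ∑' n : ℕ, zpowAux 4 n = π ^ 6 / 945 := by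
  rw [← hasSum_zeta_six'.tsum_eq]
  exact tsum_congr fun n => by rw [zpowAux_apply, inv_pow, one_div]

lemma tsum_zpowAux_one : ∑' n : ℕ, zpowAux 1 n = zetaThree := by
  have hsum : Summable (fun n : ℕ => zpowAux 1 n) := (zpowAux_summable 1).of_norm
  rw [hsum.tsum_eq_zero_add]
  have h0 : zpowAux 1 0 = 0 := by simp [zpowAux_apply]
  rw [h0, zero_add, zetaThree]
  exact tsum_congr fun n => by
    rw [zpowAux_apply, inv_pow, one_div]
    push_cast
    ring_nf

lemma abs_log_one_sub_le' {x : ℝ} (h0 : 0 ≤ x) (h1 : x ≤ 1 / 2) :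
    ‖Real.log (1 - x)‖ ≤ 2 * x := by
  have hpos : 0 < 1 - x := by linarith
  have hle : Real.log (1 - x) ≤ 0 := Real.log_nonpos (by linarith) (by linarith)
  rw [Real.norm_eq_abs, abs_of_nonpos hle, ← Real.log_inv]
  have h2 := Real.log_le_sub_one_of_pos (inv_pos.mpr hpos)
  have h3 : (1 - x)⁻¹ - 1 ≤ 2 * x := by
    rw [sub_le_iff_le_add, inv_le_iff_one_le_mul₀ hpos]
    nlinarith
  linarith

/-- Landau's totient constant: the product over all primes
`Π_p (1 + 1/(p(p-1)))` converges and equals `(315/(2π⁴)) ζ(3)`. -/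
theorem landau_totient_constant :
    Multipliable (fun p : Nat.Primes => 1 + 1 / ((p : ℝ) * ((p : ℝ) - 1))) ∧
    ∏' p : Nat.Primes, (1 + 1 / ((p : ℝ) * ((p : ℝ) - 1))) =
      315 / (2 * Real.pi ^ 4) * zetaThree := by
  set A : Nat.Primes → ℝ := fun p => (1 - zpowAux 0 p)⁻¹ with hA_def
  set B : Nat.Primes → ℝ := fun p => (1 - zpowAux 1 p)⁻¹ with hB_def
  set C : Nat.Primes → ℝ := fun p => 1 - zpowAux 4 p with hC_def
  have hple : ∀ p : Nat.Primes, (2 : ℝ) ≤ ((p : ℕ) : ℝ) := fun p => by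
    exact_mod_cast p.prop.two_le
  have hinv : ∀ p : Nat.Primes, 0 ≤ (((p : ℕ) : ℝ))⁻¹ ∧ (((p : ℕ) : ℝ))⁻¹ ≤ 1 / 2 := fun p => by
    have h2 := hple p
    refine ⟨by positivity, ?_⟩
    rw [inv_le_comm₀ (by linarith) (by norm_num)]
    linarith
  have hCbound : ∀ p : Nat.Primes, 0 ≤ zpowAux 4 (p : ℕ) ∧ zpowAux 4 (p : ℕ) ≤ 1 / 2 := by
    intro p
    obtain ⟨h0, h1⟩ := hinv p
    rw [zpowAux_apply]
    refine ⟨by positivity, ?_⟩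
    calc ((((p : ℕ) : ℝ))⁻¹) ^ (4 + 2) ≤ (1 / 2 : ℝ) ^ (4 + 2) := by
          exact pow_le_pow_left₀ h0 h1 _
      _ ≤ 1 / 2 := by norm_num
  have hCpos : ∀ p : Nat.Primes, 0 < C p := fun p => by
    obtain ⟨h0, h1⟩ := hCbound p
    simp only [hC_def]
    linarith
  have hlogsum : Summable (fun p : Nat.Primes => Real.log (C p)) := by
    apply Summable.of_norm_bounded (g := fun p : Nat.Primes => 2 * zpowAux 4 (p : ℕ))
    · exact ((zpowAux_summable 4).of_norm.comp_injective Subtype.coe_injective).mul_left 2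
    · intro p
      obtain ⟨h0, h1⟩ := hCbound p
      simpa [hC_def] using abs_log_one_sub_le' h0 h1
  have hCmul : Multipliable C := by
    have hfun : (Real.exp ∘ fun p : Nat.Primes => Real.log (C p)) = C :=
      funext fun p => Real.exp_log (hCpos p)
    exact ⟨_, hfun ▸ hlogsum.hasSum.rexp⟩
  have hAprod := zpowAux_euler 0
  have hBprod := zpowAux_euler 1
  have hCinvprod := zpowAux_euler 4
  have hpi : π ≠ 0 := Real.pi_ne_zero
  have hCprod_val : ∏' p : Nat.Primes, C p = (π ^ 6 / 945)⁻¹ := by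
    have h1 : (∏' p : Nat.Primes, C p) * (π ^ 6 / 945) = 1 := by
      rw [← tsum_zpowAux_four, ← hCinvprod.tprod_eq,
        ← Multipliable.tprod_mul hCmul hCinvprod.multipliable]
      rw [show (fun p : Nat.Primes => C p * (1 - zpowAux 4 (p : ℕ))⁻¹) = fun _ => (1 : ℝ) from
        funext fun p => mul_inv_cancel₀ (hCpos p).ne']
      exact tprod_one
    have := eq_inv_of_mul_eq_one_right ((mul_comm _ _).trans h1)
    rw [this]
  have key : ∀ p : Nat.Primes, A p * (B p * C p) = 1 + 1 / ((p : ℝ) * ((p : ℝ) - 1)) := by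
    intro p
    have hx2 : (2 : ℝ) ≤ ((p : ℕ) : ℝ) := hple p
    obtain ⟨hi0, hi1⟩ := hinv p
    simp only [hA_def, hB_def, hC_def, zpowAux_apply]
    set x : ℝ := ((p : ℕ) : ℝ)
    have hx0 : x ≠ 0 := by intro h; rw [h] at hx2; norm_num at hx2
    have hx1 : x - 1 ≠ 0 := by intro h; nlinarith [sub_eq_zero.mp h]
    have h2pos : (0 : ℝ) < 1 - (x⁻¹) ^ (0 + 2) := by
      have hp := pow_le_pow_left₀ hi0 hi1 (0 + 2)
      norm_num at hp ⊢
      linarith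
    have h3pos : (0 : ℝ) < 1 - (x⁻¹) ^ (1 + 2) := by
      have hp := pow_le_pow_left₀ hi0 hi1 (1 + 2)
      norm_num at hp ⊢
      linarith
    have hx0' : (0 : ℝ) < x := by linarith
    have h21 : x ^ 2 - 1 ≠ 0 := by nlinarith
    have h31 : x ^ 3 - 1 ≠ 0 := by nlinarith [pow_pos hx0' 3, sq_nonneg x]
    have f2 : 1 - (x⁻¹) ^ (0 + 2) = (x ^ 2 - 1) / x ^ 2 := by norm_num; field_simp
    have f3 : 1 - (x⁻¹) ^ (1 + 2) = (x ^ 3 - 1) / x ^ 3 := by norm_num; field_simp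
    have f6 : 1 - (x⁻¹) ^ (4 + 2) = (x ^ 6 - 1) / x ^ 6 := by norm_num; field_simp
    rw [f2, f3, f6]
    field_simp
    ring
  have hMul : Multipliable (fun p : Nat.Primes => 1 + 1 / ((p : ℝ) * ((p : ℝ) - 1))) :=
    ((hAprod.multipliable.mul (hBprod.multipliable.mul hCmul)).congr key)
  refine ⟨hMul, ?_⟩
  calc ∏' p : Nat.Primes, (1 + 1 / ((p : ℝ) * ((p : ℝ) - 1)))
      = ∏' p : Nat.Primes, (A p * (B p * C p)) := (tprod_congr fun p => (key p).symm)
    _ = (∏' p : Nat.Primes, A p) * ∏' p : Nat.Primes, (B p * C p) :=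
        Multipliable.tprod_mul hAprod.multipliable (hBprod.multipliable.mul hCmul)
    _ = (∏' p : Nat.Primes, A p) *
          ((∏' p : Nat.Primes, B p) * ∏' p : Nat.Primes, C p) := by
        rw [Multipliable.tprod_mul hBprod.multipliable hCmul]
    _ = (π ^ 2 / 6) * (zetaThree * (π ^ 6 / 945)⁻¹) := by
        rw [hAprod.tprod_eq, hBprod.tprod_eq, tsum_zpowAux_zero, tsum_zpowAux_one, hCprod_val]
    _ = 315 / (2 * Real.pi ^ 4) * zetaThree := by
        field_simp
        ring
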